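/- arXiv:2411.08367 — 4 statements merged into one kernel-verified Lean document; each statement's English description precedes it below -/
import Mathlib

section
/- In the concentric mixture of Mallows model with G groups, for any s with 1 ≤ s < G, α = Σ_{g=1}^s p_g, and any permutation τ with d(τ,σ*) ≥ 1, the probability of observing τ given the ground truth satisfies Pr_s(τ|σ*) ≤ α·φ_s/Z(φ_1,m) + (1−α)·φ_G/Z(φ_{s+1},m). -/
/-- Kendall–Tau distance between two permutations of `Fin m`:
the number of pairs `a < b` whose relative order differs under `σ` and `τ`. -/
def kendallTau {m : ℕ} (σ τ : Equiv.Perm (Fin m)) : ℕ :=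
  ((Finset.univ : Finset (Fin m × Fin m)).filter
    (fun q => q.1 < q.2 ∧
      ((σ q.1 < σ q.2 ∧ τ q.2 < τ q.1) ∨ (σ q.2 < σ q.1 ∧ τ q.1 < τ q.2)))).card

/-- Mallows normalization constant `Z(φ, m) = Σ_{σ ∈ S_m} φ^{d(σ, id)}`. -/
noncomputable def mallowsZ (m : ℕ) (φ : ℝ) : ℝ :=
  ∑ σ : Equiv.Perm (Fin m), φ ^ kendallTau σ 1

/-- Concentric mixture of Mallows with groups indexed `1,…,G`:
`Pr_s(σ | σ') = Σ_{g=1}^G p_g · φ_g^{d(σ,σ')} / Z(φ_g, m)`. -/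
noncomputable def cmmProb (m G : ℕ) (p φ : ℕ → ℝ) (σ σ' : Equiv.Perm (Fin m)) : ℝ :=
  ∑ g ∈ Finset.Icc 1 G, p g * φ g ^ kendallTau σ σ' / mallowsZ m (φ g)

lemma mallowsZ_pos (m : ℕ) {φ : ℝ} (hφ : 0 < φ) : 0 < mallowsZ m φ := by
  unfold mallowsZ
  exact Finset.sum_pos (fun σ _ => pow_pos hφ _) ⟨1, Finset.mem_univ 1⟩

lemma mallowsZ_mono (m : ℕ) {φ ψ : ℝ} (h0 : 0 ≤ φ) (h : φ ≤ ψ) :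
    mallowsZ m φ ≤ mallowsZ m ψ := by
  unfold mallowsZ
  exact Finset.sum_le_sum fun σ _ => pow_le_pow_left₀ h0 h _

/-- In the CMM model with `G` groups, for `1 ≤ s < G`, `α = Σ_{g=1}^s p_g`, and any `τ`
with `d(τ, σ*) ≥ 1`,
`Pr_s(τ|σ*) ≤ α · φ_s / Z(φ_1, m) + (1 − α) · φ_G / Z(φ_{s+1}, m)`. -/
theorem cmm_nontruth_prob_upper_bound
    (m G s : ℕ) (hm : 2 ≤ m) (hs : 1 ≤ s) (hsG : s < G) (p φ : ℕ → ℝ)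
    (hp : ∀ g ∈ Finset.Icc 1 G, 0 ≤ p g)
    (hpsum : ∑ g ∈ Finset.Icc 1 G, p g = 1)
    (hφpos : 0 < φ 1)
    (hφmono : ∀ g h, 1 ≤ g → g ≤ h → h ≤ G → φ g ≤ φ h)
    (hφle : φ G ≤ 1)
    (σstar τ : Equiv.Perm (Fin m)) (hτ : 1 ≤ kendallTau τ σstar) :
    cmmProb m G p φ τ σstar ≤
      (∑ g ∈ Finset.Icc 1 s, p g) * φ s / mallowsZ m (φ 1)
        + (1 - ∑ g ∈ Finset.Icc 1 s, p g) * φ G / mallowsZ m (φ (s + 1)) := by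
  have hIcc : ∀ n : ℕ, Finset.Icc 1 n = Finset.Ioc 0 n := fun n => rfl
  -- positivity of φ g for 1 ≤ g ≤ G
  have hφg : ∀ g, 1 ≤ g → g ≤ G → 0 < φ g := fun g h1 hG =>
    lt_of_lt_of_le hφpos (hφmono 1 g le_rfl h1 hG)
  have hφg1 : ∀ g, 1 ≤ g → g ≤ G → φ g ≤ 1 := fun g h1 hG =>
    le_trans (hφmono g G h1 hG le_rfl) hφle
  have hsG' : s ≤ G := le_of_lt hsG
  have hZ1 : 0 < mallowsZ m (φ 1) := mallowsZ_pos m hφpos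
  have hZs1 : 0 < mallowsZ m (φ (s + 1)) := mallowsZ_pos m (hφg (s+1) (by omega) hsG)
  -- split the sum
  have hsplit : cmmProb m G p φ τ σstar =
      (∑ g ∈ Finset.Ioc 0 s, p g * φ g ^ kendallTau τ σstar / mallowsZ m (φ g))
        + ∑ g ∈ Finset.Ioc s G, p g * φ g ^ kendallTau τ σstar / mallowsZ m (φ g) := by
    rw [cmmProb, hIcc, ← Finset.sum_Ioc_consecutive _ (Nat.zero_le s) hsG']
  rw [hsplit]
  have hpsum' : ∑ g ∈ Finset.Ioc s G, p g = 1 - ∑ g ∈ Finset.Icc 1 s, p g := by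
    rw [hIcc, eq_sub_iff_add_eq, add_comm,
      Finset.sum_Ioc_consecutive _ (Nat.zero_le s) hsG', ← hIcc, hpsum]
  have key : ∀ g, 1 ≤ g → g ≤ G → ∀ b zb, φ g ≤ b → 0 < zb → zb ≤ mallowsZ m (φ g) →
      φ g ^ kendallTau τ σstar / mallowsZ m (φ g) ≤ b / zb := by
    intro g h1 hG b zb hb hzb hz
    have hpow : φ g ^ kendallTau τ σstar ≤ φ g := by
      calc φ g ^ kendallTau τ σstar ≤ φ g ^ 1 :=
            pow_le_pow_of_le_one (le_of_lt (hφg g h1 hG)) (hφg1 g h1 hG) hτ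
        _ = φ g := pow_one _
    exact div_le_div₀ (le_trans (le_of_lt (hφg g h1 hG)) hb) (le_trans hpow hb) hzb hz
  refine add_le_add ?_ ?_
  ·
    calc (∑ g ∈ Finset.Ioc 0 s, p g * φ g ^ kendallTau τ σstar / mallowsZ m (φ g))
        ≤ ∑ g ∈ Finset.Ioc 0 s, p g * (φ s / mallowsZ m (φ 1)) := by
          refine Finset.sum_le_sum fun g hg => ?_
          rw [Finset.mem_Ioc] at hg
          rw [mul_div_assoc]
          refine mul_le_mul_of_nonneg_left ?_ (hp g (by simp [Finset.mem_Icc]; omega))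
          exact key g hg.1 (le_trans hg.2 hsG') _ _
            (hφmono g s hg.1 hg.2 hsG') hZ1
            (mallowsZ_mono m (le_of_lt hφpos) (hφmono 1 g le_rfl hg.1 (le_trans hg.2 hsG')))
      _ = (∑ g ∈ Finset.Icc 1 s, p g) * φ s / mallowsZ m (φ 1) := by
          rw [← Finset.sum_mul, hIcc, mul_div_assoc]
  ·
    calc (∑ g ∈ Finset.Ioc s G, p g * φ g ^ kendallTau τ σstar / mallowsZ m (φ g))
        ≤ ∑ g ∈ Finset.Ioc s G, p g * (φ G / mallowsZ m (φ (s + 1))) := by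
          refine Finset.sum_le_sum fun g hg => ?_
          rw [Finset.mem_Ioc] at hg
          have hg1 : 1 ≤ g := by omega
          rw [mul_div_assoc]
          refine mul_le_mul_of_nonneg_left ?_ (hp g (by simp [Finset.mem_Icc]; omega))
          exact key g hg1 hg.2 _ _ (hφmono g G hg1 hg.2 le_rfl) hZs1
            (mallowsZ_mono m (le_of_lt (hφg (s+1) (by omega) hsG))
              (hφmono (s+1) g (by omega) (by omega) hg.2))
      _ = (1 - ∑ g ∈ Finset.Icc 1 s, p g) * φ G / mallowsZ m (φ (s + 1)) := by
          rw [← Finset.sum_mul, hpsum', mul_div_assoc]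
end

section
/- If θ ∈ ℝ^m has strictly positive, nonincreasing entries (θ_1 ≥ θ_2 ≥ … ≥ θ_m > 0), then for every permutation τ ∈ S_m the Plackett–Luce probability satisfies PL(τ;θ) ≥ PL(rev;θ) = ∏_{j=1}^m θ_{m−j+1}/(Σ_{i=j}^m θ_{m−i+1}), i.e., the order-reversing permutation minimizes the Plackett–Luce probability. -/
lemma fin_strictMono_le {k m : ℕ} (f : Fin k → Fin m) (hf : StrictMono f) :
    ∀ i : Fin k, (i : ℕ) ≤ (f i : ℕ) := by
  intro i
  induction' h : (i : ℕ) with n ih generalizing i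
  · exact Nat.zero_le _
  · have hn : n < k := by omega
    have h1 : (f ⟨n, hn⟩ : ℕ) < (f i : ℕ) := hf (show (⟨n, hn⟩ : Fin k) < i by
      rw [Fin.lt_def]; simp; omega)
    have h2 := ih ⟨n, hn⟩ rfl
    omega

lemma top_sum {m : ℕ} (θ : Fin m → ℝ) (hanti : Antitone θ) (A : Finset (Fin m)) :
    ∑ a ∈ A, θ a ≤ ∑ i ∈ Finset.univ.filter (fun i : Fin m => (i : ℕ) < A.card), θ i := by
  set k := A.card with hk
  have hkm : k ≤ m := by
    simpa using (Finset.card_le_card (Finset.subset_univ A))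
  set e := A.orderEmbOfFin hk.symm with he
  have hA : A = Finset.univ.image (fun i => e i) := by
    ext a
    simp only [Finset.mem_image, Finset.mem_univ, true_and]
    constructor
    · intro ha
      have := A.range_orderEmbOfFin hk.symm
      rw [Set.ext_iff] at this
      exact (this a).2 ha
    · rintro ⟨i, rfl⟩; exact A.orderEmbOfFin_mem hk.symm i
  set g : Fin k → Fin m := fun i => ⟨i, lt_of_lt_of_le i.isLt hkm⟩ with hg
  have hB : Finset.univ.filter (fun i : Fin m => (i : ℕ) < k) = Finset.univ.image g := by
    ext a
    simp only [Finset.mem_filter, Finset.mem_image, Finset.mem_univ, true_and, hg]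
    constructor
    · intro ha; exact ⟨⟨a, ha⟩, by simp⟩
    · rintro ⟨i, rfl⟩; exact i.isLt
  rw [hA, hB, Finset.sum_image (by intro x _ y _ h; exact e.injective h),
    Finset.sum_image (by intro x _ y _ h; simpa [hg, Fin.ext_iff] using congrArg Fin.val h)]
  apply Finset.sum_le_sum
  intro i _
  exact hanti (by simpa [hg, Fin.le_def] using fin_strictMono_le e e.strictMono i)

/-- Plackett–Luce probability of the permutation `τ` under the strength vector `θ`:
`PL(τ; θ) = ∏_{j=1}^m θ_{τ(j)} / (Σ_{i=j}^m θ_{τ(i)})`. -/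
noncomputable def plProb {m : ℕ} (θ : Fin m → ℝ) (τ : Equiv.Perm (Fin m)) : ℝ :=
  ∏ j : Fin m, θ (τ j) / ∑ i ∈ Finset.univ.filter (fun i => j ≤ i), θ (τ i)

/-- If `θ` has strictly positive, nonincreasing entries, then the order-reversing
permutation minimizes the Plackett–Luce probability: `PL(τ; θ) ≥ PL(rev; θ)` for every `τ`. -/
theorem pl_rev_minimizes
    (m : ℕ) (hm : 2 ≤ m) (θ : Fin m → ℝ)
    (hpos : ∀ j, 0 < θ j) (hanti : Antitone θ) :
    ∀ τ : Equiv.Perm (Fin m), plProb θ τ ≥ plProb θ (Fin.revPerm : Equiv.Perm (Fin m)) := by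
  intro τ
  classical
  unfold plProb
  set F : Fin m → Finset (Fin m) := fun j => Finset.univ.filter (fun i => j ≤ i) with hF
  have hFself : ∀ j, j ∈ F j := fun j => by simp [hF]
  have hDpos : ∀ (σ : Equiv.Perm (Fin m)) (j : Fin m), 0 < ∑ i ∈ F j, θ (σ i) :=
    fun σ j => Finset.sum_pos (fun i _ => hpos _) ⟨j, hFself j⟩
  have hcardF : ∀ j : Fin m, (F j).card = m - j := by
    intro j
    have h : F j = Finset.Ici j := by ext i; simp [hF]
    rw [h, Fin.card_Ici]
  have key : ∀ j, (∑ i ∈ F j, θ (τ i)) ≤ ∑ i ∈ F j, θ ((Fin.revPerm : Equiv.Perm (Fin m)) i) := by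
    intro j
    have h1 : ∑ i ∈ F j, θ (τ i) = ∑ a ∈ (F j).image τ, θ a :=
      (Finset.sum_image (fun x _ y _ h => τ.injective h)).symm
    have h2 : ∑ i ∈ F j, θ ((Fin.revPerm : Equiv.Perm (Fin m)) i)
        = ∑ a ∈ (F j).image (Fin.revPerm : Equiv.Perm (Fin m)), θ a :=
      (Finset.sum_image (fun x _ y _ h => (Fin.revPerm : Equiv.Perm (Fin m)).injective h)).symm
    have hcard1 : ((F j).image τ).card = m - j :=
      by rw [Finset.card_image_of_injective _ τ.injective, hcardF]
    have himg : (F j).image (Fin.revPerm : Equiv.Perm (Fin m))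
        = Finset.univ.filter (fun i : Fin m => (i : ℕ) < ((F j).image τ).card) := by
      rw [hcard1]
      ext a
      simp only [Finset.mem_image, Finset.mem_filter, Finset.mem_univ, true_and, hF,
        Fin.revPerm_apply]
      constructor
      · rintro ⟨x, hx, rfl⟩
        have hx' : (j : ℕ) ≤ (x : ℕ) := hx
        have := x.isLt
        rw [Fin.val_rev]
        omega
      · intro ha
        refine ⟨Fin.rev a, ?_, Fin.rev_rev a⟩
        have := a.isLt
        have hj := j.isLt
        rw [Fin.le_def, Fin.val_rev]
        omega
    rw [h1, h2, himg]
    exact top_sum θ hanti _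
  rw [Finset.prod_div_distrib, Finset.prod_div_distrib,
    Equiv.prod_comp τ θ, Equiv.prod_comp (Fin.revPerm : Equiv.Perm (Fin m)) θ, ge_iff_le]
  have hA : 0 < ∏ j : Fin m, ∑ i ∈ F j, θ (τ i) :=
    Finset.prod_pos (fun j _ => hDpos τ j)
  have hle : (∏ j : Fin m, ∑ i ∈ F j, θ (τ i))
      ≤ ∏ j : Fin m, ∑ i ∈ F j, θ ((Fin.revPerm : Equiv.Perm (Fin m)) i) :=
    Finset.prod_le_prod (fun j _ => (hDpos τ j).le) (fun j _ => key j)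
  gcongr
  exact Finset.prod_nonneg (fun j _ => (hpos j).le)
end

section
/- Let θ, θ' ∈ ℝ^m have strictly positive, nonincreasing entries with Σ_j θ_j = Σ_j θ'_j = 1, and suppose θ stochastically dominates θ' (Σ_{j=1}^ℓ θ_j ≥ Σ_{j=1}^ℓ θ'_j for every ℓ). Then PL(rev;θ') ≥ PL(rev;θ), i.e., the Plackett–Luce probability of the order-reversing permutation under the dominated vector θ' is at least that under θ. -/
open Finset


noncomputable def Dfun (t : ℝ) : ℝ := Real.exp (-t) / (1 - Real.exp (-t))
noncomputable def gfun (t : ℝ) : ℝ := Real.log (1 - Real.exp (-t))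
noncomputable def slp (a b : ℝ) : ℝ := (gfun b - gfun a) / (b - a)

lemma one_sub_exp_neg_pos {t : ℝ} (ht : 0 < t) : 0 < 1 - Real.exp (-t) := by
  have h : Real.exp (-t) < Real.exp 0 := Real.exp_lt_exp.mpr (by linarith)
  simp only [Real.exp_zero] at h; linarith

lemma Dpos {t : ℝ} (ht : 0 < t) : 0 < Dfun t :=
  div_pos (Real.exp_pos _) (one_sub_exp_neg_pos ht)

lemma Danti {a b : ℝ} (ha : 0 < a) (hab : a ≤ b) : Dfun b ≤ Dfun a := by
  have hb : 0 < b := lt_of_lt_of_le ha hab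
  have hpa := one_sub_exp_neg_pos ha
  have hpb := one_sub_exp_neg_pos hb
  have hqp : Real.exp (-b) ≤ Real.exp (-a) := Real.exp_le_exp.mpr (by linarith)
  rw [Dfun, Dfun, div_le_div_iff₀ hpb hpa]
  nlinarith [Real.exp_pos (-a), Real.exp_pos (-b)]

lemma SD1 {a b : ℝ} (ha : 0 < a) (hab : a < b) :
    gfun b - gfun a ≤ (b - a) * Dfun a := by
  have hb : 0 < b := ha.trans hab
  set p := Real.exp (-a) with hpdef
  set q := Real.exp (-b) with hqdef
  have hp0 : 0 < p := Real.exp_pos _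
  have hq0 : 0 < q := Real.exp_pos _
  have hpa : 0 < 1 - p := one_sub_exp_neg_pos ha
  have hpb : 0 < 1 - q := one_sub_exp_neg_pos hb
  have hqe : q = p * Real.exp (a - b) := by
    rw [hpdef, hqdef, ← Real.exp_add]; ring_nf
  have hexp : a - b + 1 ≤ Real.exp (a - b) := Real.add_one_le_exp _
  have hkey : p - q ≤ (b - a) * p := by
    rw [hqe]; nlinarith
  have hlog : gfun b - gfun a ≤ (1 - q) / (1 - p) - 1 := by
    rw [gfun, gfun, ← Real.log_div (ne_of_gt hpb) (ne_of_gt hpa)]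
    exact Real.log_le_sub_one_of_pos (div_pos hpb hpa)
  have h2 : (1 - q) / (1 - p) - 1 = (p - q) / (1 - p) := by field_simp; ring
  have h3 : (p - q) / (1 - p) ≤ ((b - a) * p) / (1 - p) :=
    div_le_div_of_nonneg_right hkey hpa.le |>.trans_eq rfl
  rw [Dfun]
  calc gfun b - gfun a ≤ (p - q) / (1 - p) := by rw [← h2]; exact hlog
    _ ≤ ((b - a) * p) / (1 - p) := h3
    _ = (b - a) * (p / (1 - p)) := by ring

lemma SD2 {a b : ℝ} (ha : 0 < a) (hab : a < b) :
    (b - a) * Dfun b ≤ gfun b - gfun a := by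
  have hb : 0 < b := ha.trans hab
  set p := Real.exp (-a) with hpdef
  set q := Real.exp (-b) with hqdef
  have hp0 : 0 < p := Real.exp_pos _
  have hq0 : 0 < q := Real.exp_pos _
  have hpa : 0 < 1 - p := one_sub_exp_neg_pos ha
  have hpb : 0 < 1 - q := one_sub_exp_neg_pos hb
  have hqe : p = q * Real.exp (b - a) := by
    rw [hpdef, hqdef, ← Real.exp_add]; ring_nf
  have hexp : b - a + 1 ≤ Real.exp (b - a) := Real.add_one_le_exp _
  have hkey : (b - a) * q ≤ p - q := by rw [hqe]; nlinarith
  have hlog : (1 - p) / (1 - q) - 1 ≥ Real.log ((1-p)/(1-q)) - 0 := by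
    have := Real.log_le_sub_one_of_pos (div_pos hpa hpb); linarith
  have hlog2 : gfun b - gfun a ≥ 1 - (1 - p) / (1 - q) := by
    have hl : Real.log ((1-p)/(1-q)) = gfun a - gfun b := by
      rw [gfun, gfun, Real.log_div (ne_of_gt hpa) (ne_of_gt hpb)]
    linarith [hlog, hl ▸ hlog]
  have h2 : 1 - (1 - p) / (1 - q) = (p - q) / (1 - q) := by field_simp; ring
  have h3 : ((b - a) * q) / (1 - q) ≤ (p - q) / (1 - q) :=
    div_le_div_of_nonneg_right hkey hpb.le
  rw [Dfun]
  calc (b - a) * (q / (1 - q)) = ((b - a) * q) / (1 - q) := by ring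
    _ ≤ (p - q) / (1 - q) := h3
    _ = 1 - (1 - p) / (1 - q) := h2.symm
    _ ≤ gfun b - gfun a := hlog2

lemma sl_le_D {a b : ℝ} (ha : 0 < a) (hab : a < b) : slp a b ≤ Dfun a := by
  rw [slp, div_le_iff₀ (by linarith : (0:ℝ) < b - a)]
  have := SD1 ha hab; linarith [SD1 ha hab]

lemma D_le_sl {a b : ℝ} (ha : 0 < a) (hab : a < b) : Dfun b ≤ slp a b := by
  rw [slp, le_div_iff₀ (by linarith : (0:ℝ) < b - a)]
  have h := SD2 ha hab; nlinarith [SD2 ha hab]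

lemma slp_mul {a b : ℝ} (hab : a < b) : slp a b * (b - a) = gfun b - gfun a := by
  rw [slp, div_mul_cancel₀ _ (sub_ne_zero.mpr hab.ne')]

lemma sl_er {u v w : ℝ} (hu : 0 < u) (huv : u < v) (hvw : v ≤ w) :
    slp u w ≤ slp u v := by
  rcases eq_or_lt_of_le hvw with h | h
  · rw [h]
  · have hv : 0 < v := hu.trans huv
    have h1 : slp u v * (v - u) = gfun v - gfun u := slp_mul huv
    have h2 : gfun w - gfun v ≤ (w - v) * Dfun v := SD1 hv h
    have h3 : Dfun v ≤ slp u v := D_le_sl hu huv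
    rw [show slp u w = (gfun w - gfun u)/(w-u) from rfl,
      div_le_iff₀ (by linarith : (0:ℝ) < w - u)]
    nlinarith
lemma sl_el {u v w : ℝ} (hu : 0 < u) (huv : u ≤ v) (hvw : v < w) :
    slp v w ≤ slp u w := by
  rcases eq_or_lt_of_le huv with h | h
  · rw [h]
  · have hv : 0 < v := hu.trans h
    have h1 : slp v w * (w - v) = gfun w - gfun v := slp_mul hvw
    have h2 : (v - u) * Dfun v ≤ gfun v - gfun u := SD2 hu h
    have h3 : slp v w ≤ Dfun v := sl_le_D hv hvw
    rw [show slp u w = (gfun w - gfun u)/(w-u) from rfl,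
      le_div_iff₀ (by linarith : (0:ℝ) < w - u)]
    nlinarith

lemma glog {p q : ℝ} (hp : 0 < p) (hq : p < q) :
    gfun (Real.log q - Real.log p) = Real.log ((q - p) / q) := by
  have hq0 : 0 < q := hp.trans hq
  rw [gfun, show -(Real.log q - Real.log p) = Real.log (p / q) by
      rw [Real.log_div (ne_of_gt hp) (ne_of_gt hq0)]; ring,
    Real.exp_log (div_pos hp hq0)]
  congr 1
  field_simp

lemma abel (n : ℕ) (c d : ℕ → ℝ)
    (hc : ∀ i j, i ≤ j → j < n → c j ≤ c i)
    (hc0 : ∀ i, i < n → 0 ≤ c i)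
    (hd : ∀ k, k ≤ n → 0 ≤ ∑ j ∈ range k, d j) :
    0 ≤ ∑ j ∈ range n, c j * d j := by
  induction n generalizing c with
  | zero => simp
  | succ n ih =>
    have key : ∀ j, c j * d j = (c j - c n) * d j + c n * d j := by intro j; ring
    have h1 : 0 ≤ ∑ j ∈ range n, (c j - c n) * d j := by
      apply ih (fun j => c j - c n)
      · intro i j hij hjn
        have := hc i j hij (hjn.trans (Nat.lt_succ_self n)); linarith
      · intro i hi
        have := hc i n hi.le (Nat.lt_succ_self n); linarith
      · intro k hk; exact hd k (hk.trans (Nat.le_succ n))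
    have h2 : ∑ j ∈ range (n+1), c j * d j
        = (∑ j ∈ range n, (c j - c n) * d j) + c n * ∑ j ∈ range (n+1), d j := by
      rw [Finset.mul_sum, Finset.sum_range_succ (f := fun j => c j * d j),
        Finset.sum_range_succ (f := fun x => c n * d x),
        show (∑ x ∈ range n, c x * d x)
            = ∑ j ∈ range n, ((c j - c n) * d j + c n * d j) from
          Finset.sum_congr rfl (fun j _ => by ring),
        Finset.sum_add_distrib]
      ring
    rw [h2]
    have h3 : 0 ≤ c n := hc0 n (Nat.lt_succ_self n)
    have h4 : 0 ≤ ∑ j ∈ range (n+1), d j := hd (n+1) le_rfl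
    positivity

lemma tomic (n : ℕ) (X Y : ℕ → ℝ)
    (hX : ∀ i, i < n → 0 < X i) (hY : ∀ i, i < n → 0 < Y i)
    (hXm : ∀ i j, i ≤ j → j < n → X i ≤ X j)
    (hYm : ∀ i j, i ≤ j → j < n → Y i ≤ Y j)
    (hpre : ∀ l, l ≤ n → 0 ≤ ∑ i ∈ range l, (Y i - X i)) :
    ∑ i ∈ range n, gfun (X i) ≤ ∑ i ∈ range n, gfun (Y i) := by
  set c : ℕ → ℝ := fun i =>
    if X i = Y i then Dfun (X i)
    else slp (min (X i) (Y i)) (max (X i) (Y i)) with hcdef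
  -- termwise identity
  have hterm : ∀ i, i < n → gfun (Y i) - gfun (X i) = c i * (Y i - X i) := by
    intro i hi
    rcases lt_trichotomy (X i) (Y i) with h | h | h
    · have : c i = slp (X i) (Y i) := by
        simp only [hcdef, if_neg h.ne, min_eq_left h.le, max_eq_right h.le]
      rw [this, slp_mul h]
    · simp [hcdef, h]
    · have : c i = slp (Y i) (X i) := by
        simp only [hcdef, if_neg h.ne', min_eq_right h.le, max_eq_left h.le]
      rw [this]
      have := slp_mul h
      nlinarith [slp_mul h]
  -- bounds on c
  have hcub : ∀ i, i < n → c i ≤ Dfun (min (X i) (Y i)) := by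
    intro i hi
    rcases eq_or_ne (X i) (Y i) with h | h
    · simp [hcdef, h]
    · have hlt : min (X i) (Y i) < max (X i) (Y i) := min_lt_max.mpr h
      have hmn : 0 < min (X i) (Y i) := lt_min (hX i hi) (hY i hi)
      simp only [hcdef, if_neg h]
      exact sl_le_D hmn hlt
  have hclb : ∀ i, i < n → Dfun (max (X i) (Y i)) ≤ c i := by
    intro i hi
    rcases eq_or_ne (X i) (Y i) with h | h
    · simp [hcdef, h]
    · have hlt : min (X i) (Y i) < max (X i) (Y i) := min_lt_max.mpr h
      have hmn : 0 < min (X i) (Y i) := lt_min (hX i hi) (hY i hi)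
      simp only [hcdef, if_neg h]
      exact D_le_sl hmn hlt
  have hc0 : ∀ i, i < n → 0 ≤ c i := by
    intro i hi
    have hmx : 0 < max (X i) (Y i) := lt_max_of_lt_left (hX i hi)
    exact le_trans (Dpos hmx).le (hclb i hi)
  -- antitonicity of c
  have hcanti : ∀ i j, i ≤ j → j < n → c j ≤ c i := by
    intro i j hij hjn
    have hin : i < n := lt_of_le_of_lt hij hjn
    have hXij := hXm i j hij hjn
    have hYij := hYm i j hij hjn
    have hmn : min (X i) (Y i) ≤ min (X j) (Y j) := min_le_min hXij hYij
    have hmx : max (X i) (Y i) ≤ max (X j) (Y j) := max_le_max hXij hYij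
    have hmn0 : 0 < min (X i) (Y i) := lt_min (hX i hin) (hY i hin)
    have hmn0' : 0 < min (X j) (Y j) := lt_min (hX j hjn) (hY j hjn)
    rcases eq_or_ne (X i) (Y i) with h | h
    · -- tie at i : c i = Dfun (X i), and max (X i) (Y i) = X i
      have hci : c i = Dfun (X i) := by simp [hcdef, h]
      have hmxi : max (X i) (Y i) = X i := by rw [← h, max_self]
      have h1 : c j ≤ Dfun (min (X j) (Y j)) := hcub j hjn
      have h2 : Dfun (min (X j) (Y j)) ≤ Dfun (X i) := by
        apply Danti (hX i hin)
        calc X i = min (X i) (Y i) := by rw [← h, min_self]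
          _ ≤ min (X j) (Y j) := hmn
      rw [hci]; exact h1.trans h2
    · rcases eq_or_ne (X j) (Y j) with h' | h'
      · -- tie at j, no tie at i
        have hcj : c j = Dfun (X j) := by simp [hcdef, h']
        have h1 : Dfun (X j) ≤ Dfun (max (X i) (Y i)) := by
          apply Danti (lt_max_of_lt_left (hX i hin))
          calc max (X i) (Y i) ≤ max (X j) (Y j) := hmx
            _ = X j := by rw [← h', max_self]
        rw [hcj]; exact h1.trans (hclb i hin)
      · -- both non-ties
        have hlt : min (X i) (Y i) < max (X i) (Y i) := min_lt_max.mpr h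
        have hlt' : min (X j) (Y j) < max (X j) (Y j) := min_lt_max.mpr h'
        have hci : c i = slp (min (X i) (Y i)) (max (X i) (Y i)) := by
          simp only [hcdef, if_neg h]
        have hcj : c j = slp (min (X j) (Y j)) (max (X j) (Y j)) := by
          simp only [hcdef, if_neg h']
        rw [hci, hcj]
        have step1 : slp (min (X j) (Y j)) (max (X j) (Y j))
            ≤ slp (min (X i) (Y i)) (max (X j) (Y j)) :=
          sl_el hmn0 hmn hlt'
        have step2 : slp (min (X i) (Y i)) (max (X j) (Y j))
            ≤ slp (min (X i) (Y i)) (max (X i) (Y i)) :=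
          sl_er hmn0 hlt hmx
        exact step1.trans step2
  have habel : 0 ≤ ∑ i ∈ range n, c i * (Y i - X i) :=
    abel n c (fun i => Y i - X i) hcanti hc0 hpre
  have hsum : ∑ i ∈ range n, (gfun (Y i) - gfun (X i))
      = ∑ i ∈ range n, c i * (Y i - X i) :=
    Finset.sum_congr rfl (fun i hi => hterm i (mem_range.mp hi))
  have := hsum ▸ habel
  have hsplit : ∑ i ∈ range n, (gfun (Y i) - gfun (X i))
      = ∑ i ∈ range n, gfun (Y i) - ∑ i ∈ range n, gfun (X i) :=
    Finset.sum_sub_distrib _ _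
  linarith [hsplit ▸ hsum ▸ habel]

lemma half (n : ℕ) (A : ℕ → ℝ) (hA : ∀ k, k ≤ n → 0 < A k)
    (hAm : ∀ k, k < n → A k < A (k+1)) :
    Real.log (∏ k ∈ range n, ((A (k+1) - A k) / A (k+1)))
      = ∑ i ∈ range n, gfun (Real.log (A (n-i)) - Real.log (A (n-i-1))) := by
  have hfpos : ∀ k, k < n → 0 < (A (k+1) - A k) / A (k+1) := by
    intro k hk
    have h1 := hAm k hk
    have h2 := hA (k+1) hk
    exact div_pos (by linarith) h2
  rw [Real.log_prod (fun k hk => (hfpos k (mem_range.mp hk)).ne')]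
  have hpt : ∀ k, k < n → Real.log ((A (k+1) - A k) / A (k+1))
      = gfun (Real.log (A (k+1)) - Real.log (A k)) := by
    intro k hk
    rw [glog (hA k hk.le) (hAm k hk)]
  rw [Finset.sum_congr rfl (fun k hk => hpt k (mem_range.mp hk))]
  rw [← Finset.sum_range_reflect (fun k => gfun (Real.log (A (k+1)) - Real.log (A k))) n]
  apply Finset.sum_congr rfl
  intro j hj
  have hjn := mem_range.mp hj
  have e1 : n - 1 - j + 1 = n - j := by omega
  have e2 : n - 1 - j = n - j - 1 := by omega
  rw [e1, e2]

lemma key (n : ℕ) (A B : ℕ → ℝ)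
    (hA : ∀ k, k ≤ n → 0 < A k) (hB : ∀ k, k ≤ n → 0 < B k)
    (hAm : ∀ k, k < n → A k < A (k+1)) (hBm : ∀ k, k < n → B k < B (k+1))
    (hAc : ∀ k, k + 2 ≤ n → A (k+2) * A k ≤ A (k+1) * A (k+1))
    (hBc : ∀ k, k + 2 ≤ n → B (k+2) * B k ≤ B (k+1) * B (k+1))
    (hAn : A n = 1) (hBn : B n = 1)
    (hdom : ∀ k, k ≤ n → B k ≤ A k) :
    ∏ k ∈ range n, ((A (k+1) - A k) / A (k+1))
      ≤ ∏ k ∈ range n, ((B (k+1) - B k) / B (k+1)) := by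
  -- the "x" increments
  set x : ℕ → ℝ := fun k => Real.log (A k) - Real.log (A (k-1)) with hxdef
  set y : ℕ → ℝ := fun k => Real.log (B k) - Real.log (B (k-1)) with hydef
  -- antitonicity of increments from log-concavity
  have xstep : ∀ (C : ℕ → ℝ), (∀ k, k ≤ n → 0 < C k) →
      (∀ k, k + 2 ≤ n → C (k+2) * C k ≤ C (k+1) * C (k+1)) →
      ∀ l, 1 ≤ l → l + 1 ≤ n →
      Real.log (C (l+1)) - Real.log (C l) ≤ Real.log (C l) - Real.log (C (l-1)) := by
    intro C hC hCc l hl hln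
    have hc := hCc (l-1) (by omega)
    have e1 : l - 1 + 1 = l := by omega
    have e2 : l - 1 + 2 = l + 1 := by omega
    rw [e1, e2] at hc
    have h1 : 0 < C (l-1) := hC _ (by omega)
    have h2 : 0 < C l := hC _ (by omega)
    have h3 : 0 < C (l+1) := hC _ (by omega)
    have hlog : Real.log (C (l+1) * C (l-1)) ≤ Real.log (C l * C l) :=
      Real.log_le_log (by positivity) hc
    rw [Real.log_mul h3.ne' h1.ne', Real.log_mul h2.ne' h2.ne'] at hlog
    linarith
  have xanti : ∀ (C : ℕ → ℝ), (∀ k, k ≤ n → 0 < C k) →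
      (∀ k, k + 2 ≤ n → C (k+2) * C k ≤ C (k+1) * C (k+1)) →
      ∀ k, 1 ≤ k → ∀ l, k ≤ l → l ≤ n →
      Real.log (C l) - Real.log (C (l-1)) ≤ Real.log (C k) - Real.log (C (k-1)) := by
    intro C hC hCc k hk l hkl
    induction l, hkl using Nat.le_induction with
    | base => intro _; exact le_refl _
    | succ l hl ih =>
      intro hln
      have h1 := ih (by omega)
      have h2 := xstep C hC hCc l (by omega) hln
      simp only [Nat.add_sub_cancel]
      linarith
  -- telescoping sums
  have tele : ∀ (C : ℕ → ℝ), ∀ l, l ≤ n →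
      ∑ i ∈ range l, (Real.log (C (n-i)) - Real.log (C (n-i-1)))
        = Real.log (C n) - Real.log (C (n-l)) := by
    intro C l
    induction l with
    | zero => intro _; simp
    | succ l ih =>
      intro h
      rw [Finset.sum_range_succ, ih (by omega)]
      have e : n - (l+1) = n - l - 1 := by omega
      rw [e]; ring
  -- apply tomic
  set X : ℕ → ℝ := fun i => x (n - i) with hXdef
  set Y : ℕ → ℝ := fun i => y (n - i) with hYdef
  have hXpos : ∀ i, i < n → 0 < X i := by
    intro i hi
    have e : n - i - 1 + 1 = n - i := by omega
    have h := hAm (n-i-1) (by omega)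
    rw [e] at h
    have := Real.log_lt_log (hA (n-i-1) (by omega)) h
    simp only [hXdef, hxdef]
    linarith
  have hYpos : ∀ i, i < n → 0 < Y i := by
    intro i hi
    have e : n - i - 1 + 1 = n - i := by omega
    have h := hBm (n-i-1) (by omega)
    rw [e] at h
    have := Real.log_lt_log (hB (n-i-1) (by omega)) h
    simp only [hYdef, hydef]
    linarith
  have hXm : ∀ i j, i ≤ j → j < n → X i ≤ X j := by
    intro i j hij hjn
    exact xanti A hA hAc (n-j) (by omega) (n-i) (by omega) (by omega)
  have hYm : ∀ i j, i ≤ j → j < n → Y i ≤ Y j := by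
    intro i j hij hjn
    exact xanti B hB hBc (n-j) (by omega) (n-i) (by omega) (by omega)
  have hpre : ∀ l, l ≤ n → 0 ≤ ∑ i ∈ range l, (Y i - X i) := by
    intro l hl
    rw [Finset.sum_sub_distrib]
    have tA := tele A l hl
    have tB := tele B l hl
    simp only [hXdef, hYdef, hxdef, hydef] at *
    rw [tA, tB, hAn, hBn]
    have := Real.log_le_log (hB (n-l) (by omega)) (hdom (n-l) (by omega))
    simp only [Real.log_one]
    linarith
  have hmain := tomic n X Y hXpos hYpos hXm hYm hpre
  have hhalfA := half n A hA hAm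
  have hhalfB := half n B hB hBm
  have hlogle : Real.log (∏ k ∈ range n, ((A (k+1) - A k) / A (k+1)))
      ≤ Real.log (∏ k ∈ range n, ((B (k+1) - B k) / B (k+1))) := by
    rw [hhalfA, hhalfB]; exact hmain
  have hPA : 0 < ∏ k ∈ range n, ((A (k+1) - A k) / A (k+1)) := by
    apply Finset.prod_pos
    intro k hk
    have hk' := mem_range.mp hk
    exact div_pos (by linarith [hAm k hk']) (hA (k+1) hk')
  have hPB : 0 < ∏ k ∈ range n, ((B (k+1) - B k) / B (k+1)) := by
    apply Finset.prod_pos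
    intro k hk
    have hk' := mem_range.mp hk
    exact div_pos (by linarith [hBm k hk']) (hB (k+1) hk')
  calc ∏ k ∈ range n, ((A (k+1) - A k) / A (k+1))
      = Real.exp (Real.log (∏ k ∈ range n, ((A (k+1) - A k) / A (k+1)))) :=
        (Real.exp_log hPA).symm
    _ ≤ Real.exp (Real.log (∏ k ∈ range n, ((B (k+1) - B k) / B (k+1)))) :=
        Real.exp_le_exp.mpr hlogle
    _ = _ := Real.exp_log hPB

lemma plProb_rev (m : ℕ) (θ : Fin m → ℝ) :
    plProb θ (Fin.revPerm : Equiv.Perm (Fin m))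
      = ∏ j : Fin m, θ j / (∑ i ∈ univ.filter (fun i => i ≤ j), θ i) := by
  rw [plProb,
    ← Equiv.prod_comp (Fin.revPerm : Equiv.Perm (Fin m))
      (fun j => θ j / ∑ i ∈ univ.filter (fun i => i ≤ j), θ i)]
  apply Finset.prod_congr rfl
  intro j _
  congr 1
  apply Finset.sum_equiv (Fin.revPerm : Equiv.Perm (Fin m))
  · intro i
    simp only [Finset.mem_filter, Finset.mem_univ, true_and, Fin.revPerm_apply]
    exact (Fin.rev_le_rev).symm
  · intro i _; rfl

lemma filtersum (m : ℕ) (θ : Fin m → ℝ) (j : Fin m) :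
    ∑ i ∈ univ.filter (fun i => i ≤ j), θ i
      = ∑ k ∈ range (j.val + 1), (fun k => if h : k < m then θ ⟨k, h⟩ else 1) k := by
  rw [Finset.sum_filter]
  have h1 : ∀ i : Fin m, (if i ≤ j then θ i else 0)
      = (fun k => if k ≤ j.val then (if h : k < m then θ ⟨k, h⟩ else 1) else 0) i.val := by
    intro i
    simp only [Fin.le_def]
    by_cases h : (i : ℕ) ≤ (j : ℕ)
    · simp [h, i.isLt, Fin.eta]
    · simp [h]
  rw [Finset.sum_congr rfl (fun i _ => h1 i),
    Fin.sum_univ_eq_sum_range (fun k => if k ≤ j.val then (if h : k < m then θ ⟨k, h⟩ else 1) else 0) m,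
    ← Finset.sum_subset (Finset.range_subset_range.mpr (by omega : j.val + 1 ≤ m))]
  · apply Finset.sum_congr rfl
    intro k hk
    have := mem_range.mp hk
    simp only [if_pos (by omega : k ≤ j.val)]
  · intro k hkm hk
    have h2 : ¬ k < j.val + 1 := fun h => hk (mem_range.mpr h)
    simp [show ¬ k ≤ j.val by omega]

noncomputable def avec (m : ℕ) (θ : Fin m → ℝ) : ℕ → ℝ :=
  fun k => if h : k < m then θ ⟨k, h⟩ else 1

noncomputable def Svec (m : ℕ) (θ : Fin m → ℝ) : ℕ → ℝ :=
  fun k => ∑ j ∈ range (k+1), avec m θ j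

lemma avec_pos {m : ℕ} {θ : Fin m → ℝ} (hpos : ∀ j, 0 < θ j) (k : ℕ) :
    0 < avec m θ k := by
  rw [avec]; split
  · exact hpos _
  · exact one_pos

lemma Svec_pos {m : ℕ} {θ : Fin m → ℝ} (hpos : ∀ j, 0 < θ j) (k : ℕ) :
    0 < Svec m θ k :=
  Finset.sum_pos (fun j _ => avec_pos hpos j) (by simp)

lemma Svec_succ {m : ℕ} (θ : Fin m → ℝ) (k : ℕ) :
    Svec m θ (k+1) = Svec m θ k + avec m θ (k+1) :=
  Finset.sum_range_succ _ _

lemma plProb_eq (m : ℕ) (hm : 1 ≤ m) (θ : Fin m → ℝ) (hpos : ∀ j, 0 < θ j) :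
    plProb θ (Fin.revPerm : Equiv.Perm (Fin m))
      = ∏ k ∈ range (m-1), ((Svec m θ (k+1) - Svec m θ k) / Svec m θ (k+1)) := by
  rw [plProb_rev]
  have h1 : ∀ j : Fin m, θ j / (∑ i ∈ univ.filter (fun i => i ≤ j), θ i)
      = (fun k => avec m θ k / Svec m θ k) j.val := by
    intro j
    rw [filtersum m θ j]
    congr 1
    simp only [avec, j.isLt, dif_pos, Fin.eta]
  rw [Finset.prod_congr rfl (fun j _ => h1 j),
    Fin.prod_univ_eq_prod_range (fun k => avec m θ k / Svec m θ k) m,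
    show range m = range ((m-1)+1) by rw [Nat.sub_add_cancel hm],
    Finset.prod_range_succ']
  have h0 : avec m θ 0 / Svec m θ 0 = 1 := by
    rw [Svec, Finset.sum_range_one, div_self (avec_pos hpos 0).ne']
  rw [h0, mul_one]
  apply Finset.prod_congr rfl
  intro k _
  rw [Svec_succ]
  congr 1
  ring


/-- If `θ` stochastically dominates `θ'` (both positive, nonincreasing, summing to `1`),
then the Plackett–Luce probability of the order-reversing permutation under the dominated
vector is at least that under the dominating one: `PL(rev; θ') ≥ PL(rev; θ)`. -/
theorem pl_rev_antitone_in_dominance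
    (m : ℕ) (hm : 2 ≤ m) (θ θ' : Fin m → ℝ)
    (hpos : ∀ j, 0 < θ j) (hpos' : ∀ j, 0 < θ' j)
    (hanti : Antitone θ) (hanti' : Antitone θ')
    (hsum : ∑ j, θ j = 1) (hsum' : ∑ j, θ' j = 1)
    (hdom : ∀ l : Fin m,
      ∑ j ∈ Finset.univ.filter (fun j => j ≤ l), θ j ≥
        ∑ j ∈ Finset.univ.filter (fun j => j ≤ l), θ' j) :
    plProb θ' (Fin.revPerm : Equiv.Perm (Fin m)) ≥
      plProb θ (Fin.revPerm : Equiv.Perm (Fin m)) := by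
  set n := m - 1 with hn
  have hm1 : 1 ≤ m := by omega
  -- generic facts for a positive antitone vector
  have hSm : ∀ (ψ : Fin m → ℝ), (∀ j, 0 < ψ j) →
      ∀ k, k < n → Svec m ψ k < Svec m ψ (k+1) := by
    intro ψ hψ k _
    rw [Svec_succ]
    linarith [avec_pos hψ (k+1)]
  have hSc : ∀ (ψ : Fin m → ℝ), (∀ j, 0 < ψ j) → Antitone ψ →
      ∀ k, k + 2 ≤ n → Svec m ψ (k+2) * Svec m ψ k
        ≤ Svec m ψ (k+1) * Svec m ψ (k+1) := by
    intro ψ hψ hψa k hk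
    have h1 : k + 2 < m := by omega
    have h2 : k + 1 < m := by omega
    have hle : avec m ψ (k+2) ≤ avec m ψ (k+1) := by
      rw [avec, avec, dif_pos h1, dif_pos h2]
      exact hψa (by rw [Fin.mk_le_mk]; omega)
    have e1 := Svec_succ ψ (k+1)
    have e2 := Svec_succ ψ k
    have p1 := avec_pos hψ (k+1)
    have p2 := avec_pos hψ (k+2)
    have p3 := Svec_pos hψ (k+1)
    nlinarith
  have hStop : ∀ (ψ : Fin m → ℝ), (∑ j, ψ j = 1) → Svec m ψ n = 1 := by
    intro ψ hψs
    rw [Svec, show n + 1 = m by omega,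
      ← Fin.sum_univ_eq_sum_range (avec m ψ) m, ← hψs]
    apply Finset.sum_congr rfl
    intro i _
    simp only [avec, i.isLt, dif_pos, Fin.eta]
  have hSdom : ∀ k, k ≤ n → Svec m θ' k ≤ Svec m θ k := by
    intro k hk
    have hkm : k < m := by omega
    have h := hdom ⟨k, hkm⟩
    rwa [filtersum m θ ⟨k, hkm⟩, filtersum m θ' ⟨k, hkm⟩, ge_iff_le] at h
  have hkey := key n (Svec m θ) (Svec m θ')
    (fun k _ => Svec_pos hpos k) (fun k _ => Svec_pos hpos' k)
    (hSm θ hpos) (hSm θ' hpos')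
    (hSc θ hpos hanti) (hSc θ' hpos' hanti')
    (hStop θ hsum) (hStop θ' hsum') hSdom
  rw [ge_iff_le, plProb_eq m hm1 θ hpos, plProb_eq m hm1 θ' hpos']
  exact hkey
end

section
/- In the two-group concentric mixture of Plackett–Luce model with ground truth the identity permutation, weight p ≤ 1/2 on the expert group with parameter θ_1, and weight 1−p on the non-expert group with parameter θ_2 (both nonincreasing, positive, summing to 1, with θ_1 stochastically dominating θ_2), for every permutation τ and every reference ranking σ̃ one has Pr_s(τ|σ̃) ≥ 2p·PL(rev;θ_1) = 2p·∏_{j=1}^m θ_{1,m−j+1}/(Σ_{i=j}^m θ_{1,m−i+1}). -/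
/-- Two-group concentric mixture of Plackett–Luce with ground truth `id`:
`Pr_s(σ | σ̃) = p · ∏_j θ₁(σ̃⁻¹(σ(j)))/(Σ_{i≥j} θ₁(σ̃⁻¹(σ(i))))
             + (1−p) · ∏_j θ₂(σ̃⁻¹(σ(j)))/(Σ_{i≥j} θ₂(σ̃⁻¹(σ(i))))`. -/
noncomputable def cmpl2 {m : ℕ} (p : ℝ) (θ₁ θ₂ : Fin m → ℝ) (σ σ' : Equiv.Perm (Fin m)) : ℝ :=
  p * plProb θ₁ (σ'⁻¹ * σ) + (1 - p) * plProb θ₂ (σ'⁻¹ * σ)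

/-- Sum of an antitone function over any finset is at most the sum over the
initial segment of the same cardinality. -/
lemma aux_sum_le_initial {m : ℕ} (θ : Fin m → ℝ) (hanti : Antitone θ) :
    ∀ n : ℕ, ∀ s : Finset (Fin m), s.card = n →
      ∑ k ∈ s, θ k ≤ ∑ k ∈ Finset.univ.filter (fun k : Fin m => (k : ℕ) < n), θ k := by
  intro n
  induction n with
  | zero =>
    intro s hs
    rw [Finset.card_eq_zero] at hs
    subst hs
    simp
  | succ n ih =>
    intro s hs
    have hne : s.Nonempty := Finset.card_pos.mp (by omega)
    have hMs : s.max' hne ∈ s := s.max'_mem hne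
    set M := s.max' hne with hM
    have hcard : (s.erase M).card = n := by rw [Finset.card_erase_of_mem hMs, hs]; omega
    have hnm : n < m := by
      have h1 := s.card_le_univ
      simp [Finset.card_univ] at h1
      omega
    have hnM : n ≤ (M : ℕ) := by
      have hsub : s ⊆ Finset.Iic M := fun x hx => Finset.mem_Iic.mpr (s.le_max' x hx)
      have := Finset.card_le_card hsub
      rw [hs, Fin.card_Iic] at this
      omega
    have hθM : θ M ≤ θ ⟨n, hnm⟩ := hanti (by simp [Fin.le_def]; omega)
    have hins : Finset.univ.filter (fun k : Fin m => (k : ℕ) < n + 1) =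
        insert ⟨n, hnm⟩ (Finset.univ.filter (fun k : Fin m => (k : ℕ) < n)) := by
      ext k
      simp [Finset.mem_filter, Fin.ext_iff]
      omega
    have hnotmem : (⟨n, hnm⟩ : Fin m) ∉ Finset.univ.filter (fun k : Fin m => (k : ℕ) < n) := by
      simp
    rw [hins, Finset.sum_insert hnotmem]
    have h1 : ∑ k ∈ s, θ k = ∑ k ∈ s.erase M, θ k + θ M :=
      (Finset.sum_erase_add s θ hMs).symm
    rw [h1]
    have h2 := ih (s.erase M) hcard
    linarith

/-- range-sum equals sum over the Fin-filter of the same length. -/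
lemma aux_sum_range_eq_filter {m : ℕ} (F : ℕ → ℝ) (c : ℕ) (hc : c ≤ m) :
    ∑ j ∈ Finset.range c, F j =
      ∑ j ∈ Finset.univ.filter (fun j : Fin m => (j : ℕ) < c), F j := by
  have himg : Finset.range c =
      (Finset.univ.filter (fun j : Fin m => (j : ℕ) < c)).image Fin.val := by
    ext x
    simp only [Finset.mem_range, Finset.mem_image, Finset.mem_filter, Finset.mem_univ, true_and]
    constructor
    · intro hx; exact ⟨⟨x, lt_of_lt_of_le hx hc⟩, hx, rfl⟩
    · rintro ⟨j, hj, rfl⟩; exact hj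
  rw [himg, Finset.sum_image (fun a _ b _ h => Fin.val_injective h)]

/-- Abel summation + concavity of log: the stochastically dominated (more uniform) sorted
vector has the larger product. -/
lemma aux_prod_le_prod_of_dom {m : ℕ} (θ₁ θ₂ : Fin m → ℝ)
    (hpos₁ : ∀ j, 0 < θ₁ j) (hpos₂ : ∀ j, 0 < θ₂ j)
    (hanti₂ : Antitone θ₂)
    (hsum₁ : ∑ j, θ₁ j = 1) (hsum₂ : ∑ j, θ₂ j = 1)
    (hdom : ∀ l : Fin m,
      ∑ j ∈ Finset.univ.filter (fun j => j ≤ l), θ₁ j ≥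
        ∑ j ∈ Finset.univ.filter (fun j => j ≤ l), θ₂ j) :
    ∏ j, θ₁ j ≤ ∏ j, θ₂ j := by
  set e : ℕ → ℝ := fun i => if h : i < m then θ₁ ⟨i, h⟩ - θ₂ ⟨i, h⟩ else 0 with he
  set c : ℕ → ℝ := fun i => if h : i < m then (θ₂ ⟨i, h⟩)⁻¹ else 0 with hcdef
  have heval : ∀ i : Fin m, e (i : ℕ) = θ₁ i - θ₂ i := by
    intro i; simp [he, i.isLt]
  have hceval : ∀ i : Fin m, c (i : ℕ) = (θ₂ i)⁻¹ := by
    intro i; simp [hcdef, i.isLt]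
  -- total sum of e is zero
  have htot : ∑ i ∈ Finset.range m, e i = 0 := by
    rw [← Fin.sum_univ_eq_sum_range]
    rw [Finset.sum_congr rfl (fun i _ => heval i), Finset.sum_sub_distrib, hsum₁, hsum₂]
    ring
  -- partial sums of e are nonnegative
  have hpart : ∀ k : ℕ, k ≤ m → 0 ≤ ∑ j ∈ Finset.range k, e j := by
    intro k hk
    rcases Nat.eq_zero_or_pos k with hk0 | hk0
    · subst hk0; simp
    · have hl : k - 1 < m := by omega
      have hfilter : ∀ θ : Fin m → ℝ,
          ∑ j ∈ Finset.univ.filter (fun j : Fin m => j ≤ (⟨k - 1, hl⟩ : Fin m)), θ j =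
            ∑ j ∈ Finset.univ.filter (fun j : Fin m => (j : ℕ) < k), θ j := by
        intro θ
        apply Finset.sum_congr _ (fun _ _ => rfl)
        ext j
        simp [Fin.le_def]
        omega
      have hd := hdom ⟨k - 1, hl⟩
      rw [hfilter θ₁, hfilter θ₂] at hd
      rw [aux_sum_range_eq_filter e k hk]
      rw [Finset.sum_congr rfl (fun i hi => heval i), Finset.sum_sub_distrib]
      linarith
  -- Abel: ∑ c i * e i ≤ 0
  have habel : ∑ i ∈ Finset.range m, c i • e i ≤ 0 := by
    rw [Finset.sum_range_by_parts c e m, htot, smul_zero, zero_sub, neg_nonpos]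
    apply Finset.sum_nonneg
    intro i hi
    rw [Finset.mem_range] at hi
    have hi1 : i + 1 < m := by omega
    have him : i < m := by omega
    have hcmono : c i ≤ c (i + 1) := by
      simp only [hcdef, dif_pos hi1, dif_pos him]
      have : θ₂ ⟨i + 1, hi1⟩ ≤ θ₂ ⟨i, him⟩ := hanti₂ (by simp [Fin.le_def])
      exact inv_anti₀ (hpos₂ _) this
    have hE := hpart (i + 1) (by omega)
    have := mul_nonneg (sub_nonneg.mpr hcmono) hE
    simpa [smul_eq_mul] using this
  -- transfer to Fin sums
  have hsum_ce : ∑ i : Fin m, (θ₁ i - θ₂ i) * (θ₂ i)⁻¹ ≤ 0 := by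
    have : ∑ i ∈ Finset.range m, c i • e i =
        ∑ i : Fin m, (θ₁ i - θ₂ i) * (θ₂ i)⁻¹ := by
      rw [← Fin.sum_univ_eq_sum_range (fun i => c i • e i)]
      exact Finset.sum_congr rfl (fun i _ => by rw [heval i, hceval i, smul_eq_mul, mul_comm])
    linarith [habel, this.le]
  -- log comparison
  have hlog : ∑ i : Fin m, Real.log (θ₁ i) ≤ ∑ i : Fin m, Real.log (θ₂ i) := by
    have hterm : ∀ i : Fin m,
        Real.log (θ₁ i) - Real.log (θ₂ i) ≤ (θ₁ i - θ₂ i) * (θ₂ i)⁻¹ := by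
      intro i
      have h1 : Real.log (θ₁ i / θ₂ i) ≤ θ₁ i / θ₂ i - 1 :=
        Real.log_le_sub_one_of_pos (div_pos (hpos₁ i) (hpos₂ i))
      rw [Real.log_div (ne_of_gt (hpos₁ i)) (ne_of_gt (hpos₂ i))] at h1
      have h2 : θ₁ i / θ₂ i - 1 = (θ₁ i - θ₂ i) * (θ₂ i)⁻¹ := by
        rw [sub_mul, mul_inv_cancel₀ (ne_of_gt (hpos₂ i)), div_eq_mul_inv]
      linarith [h1, h2.le]
    calc ∑ i : Fin m, Real.log (θ₁ i)
        = ∑ i : Fin m, (Real.log (θ₂ i) + (Real.log (θ₁ i) - Real.log (θ₂ i))) := by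
          apply Finset.sum_congr rfl; intro i _; ring
      _ ≤ ∑ i : Fin m, Real.log (θ₂ i) + ∑ i : Fin m, (θ₁ i - θ₂ i) * (θ₂ i)⁻¹ := by
          rw [Finset.sum_add_distrib]
          exact add_le_add_right (Finset.sum_le_sum (fun i _ => hterm i)) _
      _ ≤ ∑ i : Fin m, Real.log (θ₂ i) := by linarith
  have hp1 : (0 : ℝ) < ∏ j, θ₁ j := Finset.prod_pos (fun j _ => hpos₁ j)
  have hp2 : (0 : ℝ) < ∏ j, θ₂ j := Finset.prod_pos (fun j _ => hpos₂ j)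
  rw [← Real.log_le_log_iff hp1 hp2,
    Real.log_prod (fun j _ => ne_of_gt (hpos₁ j)),
    Real.log_prod (fun j _ => ne_of_gt (hpos₂ j))]
  exact hlog

/-- The denominator at stage `j` for the reversing permutation is the sum over the
initial segment of length `m - j`. -/
lemma aux_rev_den {m : ℕ} (θ : Fin m → ℝ) (j : Fin m) :
    ∑ i ∈ Finset.univ.filter (fun i => j ≤ i), θ (Fin.revPerm i) =
      ∑ k ∈ Finset.univ.filter (fun k : Fin m => (k : ℕ) < m - (j : ℕ)), θ k := by
  apply Finset.sum_equiv (Fin.revPerm : Equiv.Perm (Fin m))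
  · intro i
    simp only [Finset.mem_filter, Finset.mem_univ, true_and, Fin.le_def, Fin.revPerm_apply,
      Fin.val_rev]
    omega
  · intro i _
    rfl

/-- Any permutation's stage-`j` denominator is at most the reversing permutation's. -/
lemma aux_den_le_rev {m : ℕ} (θ : Fin m → ℝ) (hanti : Antitone θ)
    (π : Equiv.Perm (Fin m)) (j : Fin m) :
    ∑ i ∈ Finset.univ.filter (fun i => j ≤ i), θ (π i) ≤
      ∑ i ∈ Finset.univ.filter (fun i => j ≤ i), θ (Fin.revPerm i) := by
  rw [aux_rev_den]
  have himg : ∑ i ∈ Finset.univ.filter (fun i => j ≤ i), θ (π i) =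
      ∑ k ∈ (Finset.univ.filter (fun i => j ≤ i)).image π, θ k :=
    (Finset.sum_image (fun a _ b _ h => π.injective h)).symm
  rw [himg]
  apply aux_sum_le_initial θ hanti (m - (j : ℕ))
  rw [Finset.card_image_of_injective _ π.injective]
  have : Finset.univ.filter (fun i : Fin m => j ≤ i) = Finset.Ici j := by
    ext i; simp
  rw [this, Fin.card_Ici]

/-- Key comparison: if the numerator product dominates and denominators are dominated,
`plProb θ π` is at least `plProb θ₁ rev`. -/
lemma aux_plProb_ge_rev {m : ℕ} (θ θ₁ : Fin m → ℝ)
    (hpos : ∀ j, 0 < θ j)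
    (hnum : ∏ j, θ₁ j ≤ ∏ j, θ j)
    (π : Equiv.Perm (Fin m))
    (hden : ∀ j : Fin m,
      ∑ i ∈ Finset.univ.filter (fun i => j ≤ i), θ (π i) ≤
        ∑ i ∈ Finset.univ.filter (fun i => j ≤ i), θ₁ (Fin.revPerm i)) :
    plProb θ₁ (Fin.revPerm : Equiv.Perm (Fin m)) ≤ plProb θ π := by
  have hDpos : ∀ (θ' : Fin m → ℝ), (∀ j, 0 < θ' j) → ∀ (π' : Equiv.Perm (Fin m)) (j : Fin m),
      0 < ∑ i ∈ Finset.univ.filter (fun i => j ≤ i), θ' (π' i) := by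
    intro θ' hp π' j
    apply Finset.sum_pos (fun i _ => hp _)
    exact ⟨j, by simp⟩
  unfold plProb
  rw [Finset.prod_div_distrib, Finset.prod_div_distrib]
  rw [Equiv.prod_comp π θ, Equiv.prod_comp (Fin.revPerm : Equiv.Perm (Fin m)) θ₁]
  apply div_le_div₀ (le_of_lt (Finset.prod_pos (fun j _ => hpos j))) hnum
  · exact Finset.prod_pos (fun j _ => hDpos θ hpos π j)
  · exact Finset.prod_le_prod (fun j _ => le_of_lt (hDpos θ hpos π j)) (fun j _ => hden j)

/-- Positivity of any Plackett–Luce probability for positive strengths. -/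
lemma aux_plProb_pos {m : ℕ} (θ : Fin m → ℝ) (hpos : ∀ j, 0 < θ j)
    (π : Equiv.Perm (Fin m)) : 0 < plProb θ π ∨ m = 0 := by
  rcases Nat.eq_zero_or_pos m with h | h
  · exact Or.inr h
  · left
    unfold plProb
    apply Finset.prod_pos
    intro j _
    apply div_pos (hpos _)
    apply Finset.sum_pos (fun i _ => hpos _)
    exact ⟨j, by simp⟩

/-- In the two-group CMPL model with `p ≤ 1/2` and `θ₁` stochastically dominating `θ₂`,
for every permutation `τ` and every reference ranking `σ̃`,
`Pr_s(τ|σ̃) ≥ 2p·PL(rev;θ₁)`. -/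
theorem cmpl2_lower_bound_any_reference
    (m : ℕ) (hm : 2 ≤ m) (p : ℝ) (θ₁ θ₂ : Fin m → ℝ)
    (hp0 : 0 ≤ p) (hp : p ≤ 1 / 2)
    (hpos₁ : ∀ j, 0 < θ₁ j) (hpos₂ : ∀ j, 0 < θ₂ j)
    (hanti₁ : Antitone θ₁) (hanti₂ : Antitone θ₂)
    (hsum₁ : ∑ j, θ₁ j = 1) (hsum₂ : ∑ j, θ₂ j = 1)
    (hdom : ∀ l : Fin m,
      ∑ j ∈ Finset.univ.filter (fun j => j ≤ l), θ₁ j ≥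
        ∑ j ∈ Finset.univ.filter (fun j => j ≤ l), θ₂ j) :
    ∀ τ σt : Equiv.Perm (Fin m),
      cmpl2 p θ₁ θ₂ τ σt ≥ 2 * p * plProb θ₁ (Fin.revPerm : Equiv.Perm (Fin m)) := by
  intro τ σt
  set π : Equiv.Perm (Fin m) := σt⁻¹ * τ with hπ
  -- first comparison: θ₁ against itself
  have hA : plProb θ₁ (Fin.revPerm : Equiv.Perm (Fin m)) ≤ plProb θ₁ π :=
    aux_plProb_ge_rev θ₁ θ₁ hpos₁ le_rfl π (fun j => aux_den_le_rev θ₁ hanti₁ π j)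
  -- second comparison: θ₂ against θ₁
  have hB : plProb θ₁ (Fin.revPerm : Equiv.Perm (Fin m)) ≤ plProb θ₂ π := by
    apply aux_plProb_ge_rev θ₂ θ₁ hpos₂
      (aux_prod_le_prod_of_dom θ₁ θ₂ hpos₁ hpos₂ hanti₂ hsum₁ hsum₂ hdom) π
    intro j
    calc ∑ i ∈ Finset.univ.filter (fun i => j ≤ i), θ₂ (π i)
        ≤ ∑ i ∈ Finset.univ.filter (fun i => j ≤ i), θ₂ (Fin.revPerm i) :=
          aux_den_le_rev θ₂ hanti₂ π j
      _ ≤ ∑ i ∈ Finset.univ.filter (fun i => j ≤ i), θ₁ (Fin.revPerm i) := by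
          rw [aux_rev_den, aux_rev_den]
          have hl : m - 1 - (j : ℕ) < m := by omega
          have hfilter : ∀ θ : Fin m → ℝ,
              ∑ k ∈ Finset.univ.filter (fun k : Fin m => (k : ℕ) < m - (j : ℕ)), θ k =
                ∑ k ∈ Finset.univ.filter
                    (fun k : Fin m => k ≤ (⟨m - 1 - (j : ℕ), hl⟩ : Fin m)), θ k := by
            intro θ
            apply Finset.sum_congr _ (fun _ _ => rfl)
            ext k
            simp [Fin.le_def]
            omega
          rw [hfilter θ₂, hfilter θ₁]
          exact hdom _
  have hR : 0 < plProb θ₁ (Fin.revPerm : Equiv.Perm (Fin m)) := by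
    rcases aux_plProb_pos θ₁ hpos₁ (Fin.revPerm : Equiv.Perm (Fin m)) with h | h
    · exact h
    · omega
  -- assemble
  have h1 : p * plProb θ₁ (Fin.revPerm : Equiv.Perm (Fin m)) ≤ p * plProb θ₁ π :=
    mul_le_mul_of_nonneg_left hA hp0
  have h2 : p * plProb θ₁ (Fin.revPerm : Equiv.Perm (Fin m)) ≤ p * plProb θ₂ π :=
    mul_le_mul_of_nonneg_left hB hp0
  have h3 : p * plProb θ₂ π ≤ (1 - p) * plProb θ₂ π := by
    apply mul_le_mul_of_nonneg_right (by linarith)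
    linarith [hB, hR.le]
  unfold cmpl2
  rw [← hπ]
  linarith
end
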